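/- Under Assumption (β), the numerical range of the normalized Laplacian is contained in the closed disc of center 1 and radius 1: for every finitely supported f : V → ℂ with ‖f‖_{β⁺} = 1 one has |(Δ̃f, f)_{β⁺} − 1| ≤ 1. -/

import Mathlib

open Function Complex

/-- `β⁺(x) = Σ_y b(x,y)`. -/
noncomputable def betaPlus {V : Type*} (b : V → V → ℝ) (x : V) : ℝ := ∑ᶠ y, b x y

/-- `β⁻(x) = Σ_y b(y,x)`. -/
noncomputable def betaMinus {V : Type*} (b : V → V → ℝ) (x : V) : ℝ := ∑ᶠ y, b y x

/-- The Laplacian `Δf(x) = (1/m(x)) Σ_y b(x,y)(f(x) - f(y))`; the normalized Laplacian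
`Δ̃` is the case `m = β⁺`. -/
noncomputable def lap {V : Type*} (b : V → V → ℝ) (m : V → ℝ) (f : V → ℂ) (x : V) : ℂ :=
  (1 / (m x : ℂ)) * ∑ᶠ y, (b x y : ℂ) * (f x - f y)

/-- The weighted inner product `(f,g)_w = Σ_x w(x) f(x) conj(g(x))`. -/
noncomputable def innerW {V : Type*} (w : V → ℝ) (f g : V → ℂ) : ℂ :=
  ∑ᶠ x, (w x : ℂ) * f x * (starRingEnd ℂ) (g x)

/-- Under Assumption (β), the numerical range of the normalized Laplacian is
contained in the closed disc of center 1 and radius 1: for every finitely supported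
`f : V → ℂ` with `‖f‖_{β⁺} = 1` (equivalently `(f,f)_{β⁺} = 1`) one has
`|(Δ̃f, f)_{β⁺} - 1| ≤ 1`. -/
theorem numerical_range_in_disc
    (V : Type*) [Countable V] (b : V → V → ℝ)
    (hb_nonneg : ∀ x y, 0 ≤ b x y)
    (hb_loop : ∀ x, b x x = 0)
    (hloc_fin : ∀ x, {y | b x y ≠ 0 ∨ b y x ≠ 0}.Finite)
    (hβp_pos : ∀ x, 0 < betaPlus b x)
    (hβm_pos : ∀ x, 0 < betaMinus b x)
    (hβ : ∀ x, betaPlus b x = betaMinus b x)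
    (f : V → ℂ) (hf : (support f).Finite)
    (hnorm : innerW (betaPlus b) f f = 1) :
    ‖innerW (betaPlus b) (lap b (betaPlus b) f) f - 1‖ ≤ 1 := by
  classical
  set C := starRingEnd ℂ with hC
  set T := hf.toFinset with hT
  set U := T ∪ T.biUnion (fun x => (hloc_fin x).toFinset) with hUdef
  have hfT : ∀ x, f x ≠ 0 → x ∈ U := fun x hx =>
    Finset.mem_union_left _ (hf.mem_toFinset.mpr hx)
  have hmemN : ∀ x, f x ≠ 0 → ∀ y, b x y ≠ 0 → y ∈ U := by
    intro x hx y hy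
    refine Finset.mem_union_right _ (Finset.mem_biUnion.mpr ⟨x, hf.mem_toFinset.mpr hx, ?_⟩)
    exact (hloc_fin x).mem_toFinset.mpr (Or.inl hy)
  have hmemNm : ∀ y, f y ≠ 0 → ∀ x, b x y ≠ 0 → x ∈ U := by
    intro y hy x hx
    refine Finset.mem_union_right _ (Finset.mem_biUnion.mpr ⟨y, hf.mem_toFinset.mpr hy, ?_⟩)
    exact (hloc_fin y).mem_toFinset.mpr (Or.inr hx)
  have hbp : ∀ x, f x ≠ 0 → betaPlus b x = ∑ y ∈ U, b x y := by
    intro x hx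
    exact finsum_eq_finset_sum_of_support_subset _ (fun y hy => hmemN x hx y hy)
  have hbm : ∀ y, f y ≠ 0 → betaMinus b y = ∑ x ∈ U, b x y := by
    intro y hy
    exact finsum_eq_finset_sum_of_support_subset _ (fun x hx => hmemNm y hy x hx)
  have hIW : ∀ g : V → ℂ, innerW (betaPlus b) g f
      = ∑ x ∈ U, (betaPlus b x : ℂ) * g x * C (f x) := by
    intro g
    refine finsum_eq_finset_sum_of_support_subset _ ?_
    intro x hx
    simp only [Function.mem_support] at hx
    by_contra hxU
    have hfx : f x = 0 := by
      by_contra h; exact hxU (hfT x h)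
    simp [hC, hfx] at hx
  have hlap : ∀ x, f x ≠ 0 →
      (betaPlus b x : ℂ) * lap b (betaPlus b) f x
        = ∑ y ∈ U, (b x y : ℂ) * (f x - f y) := by
    intro x hx
    have hb0 : (betaPlus b x : ℂ) ≠ 0 := by
      exact_mod_cast (hβp_pos x).ne'
    rw [lap, ← mul_assoc, mul_one_div_cancel hb0, one_mul]
    refine finsum_eq_finset_sum_of_support_subset _ ?_
    intro y hy
    simp only [Function.mem_support] at hy
    have hby : b x y ≠ 0 := by
      intro h; simp [h] at hy
    exact hmemN x hx y hby
  -- left inner product as a double sum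
  have hL : innerW (betaPlus b) (lap b (betaPlus b) f) f
      = ∑ x ∈ U, ∑ y ∈ U, (b x y : ℂ) * (f x - f y) * C (f x) := by
    rw [hIW]
    refine Finset.sum_congr rfl ?_
    intro x _
    by_cases hx : f x = 0
    · simp [hC, hx]
    · rw [hlap x hx, Finset.sum_mul]
  -- the norm condition as a double sum
  have h1 : (1 : ℂ) = ∑ x ∈ U, ∑ y ∈ U, (b x y : ℂ) * (f x * C (f x)) := by
    rw [← hnorm, hIW]
    refine Finset.sum_congr rfl ?_
    intro x _
    by_cases hx : f x = 0
    · simp [hC, hx]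
    · rw [hbp x hx]
      push_cast
      rw [Finset.sum_mul, Finset.sum_mul]
      exact Finset.sum_congr rfl (fun y _ => by ring)
  have key : innerW (betaPlus b) (lap b (betaPlus b) f) f - 1
      = ∑ x ∈ U, ∑ y ∈ U, -((b x y : ℂ) * f y * C (f x)) := by
    rw [hL, h1, ← Finset.sum_sub_distrib]
    refine Finset.sum_congr rfl (fun x _ => ?_)
    rw [← Finset.sum_sub_distrib]
    exact Finset.sum_congr rfl (fun y _ => by ring)
  -- real norm sum
  have hA : ∑ x ∈ U, betaPlus b x * ‖f x‖ ^ 2 = 1 := by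
    have h2 : ((∑ x ∈ U, betaPlus b x * ‖f x‖ ^ 2 : ℝ) : ℂ) = 1 := by
      rw [← hnorm, hIW]
      push_cast
      refine Finset.sum_congr rfl (fun x _ => ?_)
      rw [mul_assoc, hC, Complex.mul_conj]
      rw [Complex.normSq_eq_norm_sq]
      push_cast
      ring
    exact_mod_cast h2
  have hAsum : ∑ x ∈ U, ∑ y ∈ U, b x y * ‖f x‖ ^ 2 = 1 := by
    rw [← hA]
    refine Finset.sum_congr rfl (fun x _ => ?_)
    by_cases hx : f x = 0
    · simp [hx]
    · rw [hbp x hx, Finset.sum_mul]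
  have hBsum : ∑ x ∈ U, ∑ y ∈ U, b x y * ‖f y‖ ^ 2 = 1 := by
    rw [Finset.sum_comm, ← hA]
    refine Finset.sum_congr rfl (fun y _ => ?_)
    by_cases hy : f y = 0
    · simp [hy]
    · rw [hβ y, hbm y hy, Finset.sum_mul]
  rw [key]
  have hbound : ‖∑ x ∈ U, ∑ y ∈ U, -((b x y : ℂ) * f y * C (f x))‖
      ≤ ∑ x ∈ U, ∑ y ∈ U, b x y * ((‖f x‖ ^ 2 + ‖f y‖ ^ 2) / 2) := by
    refine (norm_sum_le _ _).trans (Finset.sum_le_sum (fun x _ => ?_))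
    refine (norm_sum_le _ _).trans (Finset.sum_le_sum (fun y _ => ?_))
    have hn : ‖-((b x y : ℂ) * f y * C (f x))‖ = b x y * (‖f y‖ * ‖f x‖) := by
      rw [norm_neg, norm_mul, norm_mul, hC, RCLike.norm_conj,
        Complex.norm_real, Real.norm_eq_abs, _root_.abs_of_nonneg (hb_nonneg x y), mul_assoc]
    rw [hn]
    nlinarith [sq_nonneg (‖f x‖ - ‖f y‖), hb_nonneg x y, norm_nonneg (f x), norm_nonneg (f y)]
  refine hbound.trans (le_of_eq ?_)
  have expand : ∀ x y : V, b x y * ((‖f x‖ ^ 2 + ‖f y‖ ^ 2) / 2)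
      = (b x y * ‖f x‖ ^ 2) / 2 + (b x y * ‖f y‖ ^ 2) / 2 := fun x y => by ring
  simp_rw [expand, Finset.sum_add_distrib, ← Finset.sum_div]
  rw [hAsum, hBsum]
  norm_num
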